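/- Fix κ² > 0, let α_κ > 0 be the unique solution of (1/2π) ∫_{−π}^{π} ( α² + κ² sin²x )^{−1/2} dx = 1, and set E_κ := ∫_{−π}^{π} √( 1 + (κ²/α_κ²) sin²x ) dx. Then for every C¹ function θ : [−π, π] → ℝ with θ(π) = θ(−π) − 2π (degree-zero class), ∫_{−π}^{π} ( |θ'(t) + 1|² + κ² sin²θ(t) ) dt ≥ −2π(1 + α_κ²) + 2 α_κ E_κ, and equality holds if and only if θ'(t) = −√( α_κ² + κ² sin²θ(t) ) for all t ∈ [−π, π]. -/

import Mathlib

open Real Set MeasureTheory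

/-- **Sharp lower bound in the degree-zero in-plane class**: let `α_κ > 0` be the
unique solution of `(1/2π)∫_{−π}^{π}(α² + κ² sin²x)^{−1/2} dx = 1` and
`E_κ = ∫_{−π}^{π} √(1 + (κ²/α_κ²) sin²x) dx`. Then for every `C¹` `θ` with
`θ(π) = θ(−π) − 2π`, `∫_{−π}^{π}(|θ'+1|² + κ² sin²θ) dt ≥ −2π(1+α_κ²) + 2α_κ E_κ`,
with equality iff `θ'(t) = −√(α_κ² + κ² sin²θ(t))` for all `t ∈ [−π, π]`. -/
theorem degree_zero_inplane_bound
    (κ : ℝ) (hκ : 0 < κ ^ 2)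
    (α : ℝ) (hα : 0 < α)
    (hαeq : (1 / (2 * π)) *
        (∫ x in (-π)..π, 1 / Real.sqrt (α ^ 2 + κ ^ 2 * Real.sin x ^ 2)) = 1)
    (θ : ℝ → ℝ) (hθ : ContDiff ℝ 1 θ)
    (hdeg : θ π = θ (-π) - 2 * π) :
    -(2 * π) * (1 + α ^ 2)
        + 2 * α * (∫ x in (-π)..π, Real.sqrt (1 + κ ^ 2 / α ^ 2 * Real.sin x ^ 2))
      ≤ ∫ t in (-π)..π, ((deriv θ t + 1) ^ 2 + κ ^ 2 * Real.sin (θ t) ^ 2) ∧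
    ((∫ t in (-π)..π, ((deriv θ t + 1) ^ 2 + κ ^ 2 * Real.sin (θ t) ^ 2))
        = -(2 * π) * (1 + α ^ 2)
            + 2 * α * (∫ x in (-π)..π, Real.sqrt (1 + κ ^ 2 / α ^ 2 * Real.sin x ^ 2)) ↔
      ∀ t ∈ Icc (-π) π,
        deriv θ t = -Real.sqrt (α ^ 2 + κ ^ 2 * Real.sin (θ t) ^ 2)) := by
  have hπ : (0 : ℝ) < π := Real.pi_pos
  have hle : (-π : ℝ) ≤ π := by linarith
  set f : ℝ → ℝ := fun x => Real.sqrt (α ^ 2 + κ ^ 2 * Real.sin x ^ 2) with hfdef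
  have hfc : Continuous f := by
    apply Real.continuous_sqrt.comp; continuity
  have hθc : Continuous θ := hθ.continuous
  have hθ' : Continuous (deriv θ) := hθ.continuous_deriv le_rfl
  set g : ℝ → ℝ := fun t => f (θ t) with hgdef
  have hgc : Continuous g := hfc.comp hθc
  have hg2 : ∀ t, g t ^ 2 = α ^ 2 + κ ^ 2 * Real.sin (θ t) ^ 2 := fun t =>
    Real.sq_sqrt (by positivity)
  -- substitution
  have hsub : (∫ t in (-π)..π, deriv θ t * g t) = ∫ u in θ (-π)..θ π, f u := by
    have := intervalIntegral.integral_comp_smul_deriv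
      (f := θ) (f' := deriv θ) (g := f) (a := -π) (b := π)
      (fun x _ => (hθ.differentiable one_ne_zero x).hasDerivAt)
      hθ'.continuousOn hfc
    simpa [Function.comp, smul_eq_mul] using this
  -- periodicity
  have hper : Function.Periodic f (2 * π) := fun x => by
    simp [hfdef, Real.sin_add_two_pi]
  have hA : (∫ u in θ (-π)..θ π, f u) = -∫ x in (-π)..π, f x := by
    have h1 : θ (-π) = θ π + 2 * π := by linarith
    have h2 : (∫ u in θ π..θ π + 2 * π, f u) = ∫ u in (-π)..(-π + 2 * π), f u :=
      hper.intervalIntegral_add_eq (θ π) (-π)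
    have h3 : (-π + 2 * π : ℝ) = π := by ring
    rw [intervalIntegral.integral_symm, h1, h2, h3]
  -- f = α * √(1 + κ²/α² sin²)
  have hfα : ∀ x, f x = α * Real.sqrt (1 + κ ^ 2 / α ^ 2 * Real.sin x ^ 2) := by
    intro x
    have hα0 : α ≠ 0 := ne_of_gt hα
    have : α ^ 2 + κ ^ 2 * Real.sin x ^ 2
        = α ^ 2 * (1 + κ ^ 2 / α ^ 2 * Real.sin x ^ 2) := by field_simp; try ring
    rw [hfdef]; simp only
    rw [this, Real.sqrt_mul (sq_nonneg α)]
    try rw [Real.sqrt_sq hα.le]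
  have hAE : (∫ x in (-π)..π, f x)
      = α * ∫ x in (-π)..π, Real.sqrt (1 + κ ^ 2 / α ^ 2 * Real.sin x ^ 2) := by
    rw [← intervalIntegral.integral_const_mul]
    exact intervalIntegral.integral_congr fun x _ => hfα x
  -- pointwise identity
  have key : ∀ t, (deriv θ t + 1) ^ 2 + κ ^ 2 * Real.sin (θ t) ^ 2
      = (deriv θ t + g t) ^ 2 + (2 * deriv θ t + (1 - α ^ 2))
        - 2 * (deriv θ t * g t) := by
    intro t
    have := hg2 t
    nlinarith [this]
  -- integrability
  have i1 : IntervalIntegrable (fun t => (deriv θ t + g t) ^ 2) volume (-π) π :=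
    (((hθ'.add hgc).pow 2)).intervalIntegrable _ _
  have i2 : IntervalIntegrable (fun t => 2 * deriv θ t + (1 - α ^ 2)) volume (-π) π :=
    ((continuous_const.mul hθ').add continuous_const).intervalIntegrable _ _
  have i3 : IntervalIntegrable (fun t => 2 * (deriv θ t * g t)) volume (-π) π :=
    (continuous_const.mul (hθ'.mul hgc)).intervalIntegrable _ _
  set Q : ℝ := ∫ t in (-π)..π, (deriv θ t + g t) ^ 2 with hQdef
  have hI : (∫ t in (-π)..π, ((deriv θ t + 1) ^ 2 + κ ^ 2 * Real.sin (θ t) ^ 2))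
      = Q + (∫ t in (-π)..π, (2 * deriv θ t + (1 - α ^ 2)))
        - ∫ t in (-π)..π, 2 * (deriv θ t * g t) := by
    rw [hQdef, ← intervalIntegral.integral_add i1 i2,
      ← intervalIntegral.integral_sub (i1.add i2) i3]
    exact intervalIntegral.integral_congr fun t _ => key t
  have hderint : (∫ t in (-π)..π, deriv θ t) = θ π - θ (-π) :=
    intervalIntegral.integral_deriv_eq_sub
      (fun x _ => hθ.differentiable one_ne_zero x) (hθ'.intervalIntegrable _ _)
  have hmid : (∫ t in (-π)..π, (2 * deriv θ t + (1 - α ^ 2)))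
      = 2 * (θ π - θ (-π)) + (1 - α ^ 2) * (2 * π) := by
    rw [intervalIntegral.integral_add (f := fun t => 2 * deriv θ t) (g := fun _ => 1 - α ^ 2) ((continuous_const.mul hθ').intervalIntegrable _ _)
      (intervalIntegrable_const), intervalIntegral.integral_const_mul, hderint,
      intervalIntegral.integral_const]
    simp [smul_eq_mul]; ring
  have hlast : (∫ t in (-π)..π, 2 * (deriv θ t * g t))
      = -2 * α * ∫ x in (-π)..π, Real.sqrt (1 + κ ^ 2 / α ^ 2 * Real.sin x ^ 2) := by
    rw [intervalIntegral.integral_const_mul, hsub, hA, hAE]; ring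
  set E : ℝ := ∫ x in (-π)..π, Real.sqrt (1 + κ ^ 2 / α ^ 2 * Real.sin x ^ 2) with hEdef
  have hItot : (∫ t in (-π)..π, ((deriv θ t + 1) ^ 2 + κ ^ 2 * Real.sin (θ t) ^ 2))
      = Q + (-(2 * π) * (1 + α ^ 2) + 2 * α * E) := by
    rw [hI, hmid, hlast, hdeg]; ring
  have hQnn : 0 ≤ Q :=
    intervalIntegral.integral_nonneg hle fun t _ => sq_nonneg _
  constructor
  · linarith
  constructor
  · -- equality → ODE
    intro heq t ht
    have hQ0 : Q = 0 := by linarith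
    by_contra hne
    have hpos : 0 < (deriv θ t + g t) ^ 2 := by
      apply sq_pos_of_ne_zero
      intro h0
      refine hne ?_
      simp only [hgdef, hfdef] at h0
      linarith
    set h : ℝ → ℝ := fun s => (deriv θ s + g s) ^ 2 with hhdef
    have hhc : Continuous h := (hθ'.add hgc).pow 2
    have hU : IsOpen {s | 0 < h s} := isOpen_lt continuous_const hhc
    obtain ⟨r, hr, hball⟩ := Metric.isOpen_iff.1 hU t hpos
    rw [Real.ball_eq_Ioo] at hball
    set a' := max (-π) (t - r)
    set b' := min π (t + r)
    have hab : a' < b' := by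
      simp only [a', b', max_lt_iff, lt_min_iff]
      obtain ⟨h1, h2⟩ := ht
      exact ⟨⟨by linarith, by linarith⟩, ⟨by linarith, by linarith⟩⟩
    have hss : Ioo a' b' ⊆ Function.support h ∩ Ioc (-π) π := by
      intro x hx
      obtain ⟨hx1, hx2⟩ := hx
      constructor
      · have : x ∈ {s | 0 < h s} := hball ⟨lt_of_le_of_lt (le_max_right _ _) hx1,
          lt_of_lt_of_le hx2 (min_le_right _ _)⟩
        exact ne_of_gt this
      · exact ⟨lt_of_le_of_lt (le_max_left _ _) hx1,
          le_trans hx2.le (min_le_left _ _)⟩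
    have hμ : 0 < volume (Function.support h ∩ Ioc (-π) π) := by
      refine lt_of_lt_of_le ?_ (measure_mono hss)
      rw [Real.volume_Ioo]
      exact ENNReal.ofReal_pos.2 (by linarith)
    have hintQ : 0 < ∫ s in Ioc (-π) π, h s := by
      refine (MeasureTheory.setIntegral_pos_iff_support_of_nonneg_ae ?_ ?_).2 hμ
      · exact Filter.Eventually.of_forall fun x => sq_nonneg _
      · exact hhc.integrableOn_Ioc
    have : Q = ∫ s in Ioc (-π) π, h s := intervalIntegral.integral_of_le hle
    linarith
  · -- ODE → equality
    intro hode
    have hQ0 : Q = 0 := by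
      rw [hQdef]
      rw [show (∫ t in (-π)..π, (deriv θ t + g t) ^ 2) = ∫ t in (-π)..π, (0:ℝ) from
        intervalIntegral.integral_congr fun t ht => by
          rw [uIcc_of_le hle] at ht
          have := hode t ht
          simp only [hgdef, hfdef]
          rw [this]; ring]
      simp
    rw [hItot, hQ0]; ring
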